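/- For every c ∈ (0,1) there exist a constant C > 0 and N ∈ ℕ such that for every integer n ≥ N and every real β with n^c ≤ β ≤ n^{2−c} and β ≤ n^{2/3}: the matrix Σ̃_t is positive definite for every t ∈ T', and ∫_{T'} ∫_0^∞ y·(det Σ̃_t)^{−1/2}·φ₂(Σ̃_t^{−1/2}·((0, y) − μ̃_t)) dy dt ≤ C·√β. -/

import Mathlib

set_option maxHeartbeats 1000000


open MeasureTheory ProbabilityTheory Real Set Filter Matrix
open scoped ENNReal BigOperators

/-- The approximating mean vector
`μ̃_t = √n·β^(−3/2)·e^(−t²/2)·(t, 1 − t²) ∈ ℝ²`. -/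
noncomputable def muTilde (n : ℕ) (β t : ℝ) : Fin 2 → ℝ :=
  (Real.sqrt n * β ^ (-(3 : ℝ) / 2) * Real.exp (-t ^ 2 / 2)) • ![t, 1 - t ^ 2]

/-- The approximating covariance matrix
`Σ̃_t = 2^(−5/2)·β^(−3/2)·e^(−t²/2)·[[2, −t], [−t, 3β]]`. -/
noncomputable def sigmaTilde (β t : ℝ) : Matrix (Fin 2) (Fin 2) ℝ :=
  ((2 : ℝ) ^ (-(5 : ℝ) / 2) * β ^ (-(3 : ℝ) / 2) * Real.exp (-t ^ 2 / 2)) •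
    !![2, -t; -t, 3 * β]

/-- The standard bivariate Gaussian density `φ₂(v) = (2π)^(−1)·exp(−‖v‖²/2)`. -/
noncomputable def phi2 (v : Fin 2 → ℝ) : ℝ :=
  (2 * Real.pi)⁻¹ * Real.exp (-((v 0) ^ 2 + (v 1) ^ 2) / 2)

lemma phi2_nonneg (v : Fin 2 → ℝ) : 0 ≤ phi2 v := by
  unfold phi2; positivity

lemma sqrt_le_exp {x : ℝ} (hx : 0 ≤ x) : Real.sqrt x ≤ Real.exp x := by
  have h1 : x ≤ (Real.exp x)^2 := by
    nlinarith [Real.add_one_le_exp x, Real.exp_pos x]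
  calc Real.sqrt x ≤ Real.sqrt ((Real.exp x)^2) := Real.sqrt_le_sqrt h1
    _ = Real.exp x := Real.sqrt_sq (Real.exp_pos x).le

lemma quad_bound (β t a : ℝ) (hβ : 0 < β) (ha : 0 < a) (ht : t^2 ≤ 3*β)
    (S : Matrix (Fin 2) (Fin 2) ℝ) (hsym : S 1 0 = S 0 1)
    (hEq : S * S * (a • !![(2:ℝ), -t; -t, 3*β]) = 1) (w : Fin 2 → ℝ) :
    w 0 ^ 2 / (4*a) + w 1 ^ 2 / (6*β*a) ≤ (S.mulVec w 0)^2 + (S.mulVec w 1)^2 := by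
  have E00 := congrFun (congrFun hEq 0) 0
  have E01 := congrFun (congrFun hEq 0) 1
  have E10 := congrFun (congrFun hEq 1) 0
  have E11 := congrFun (congrFun hEq 1) 1
  simp [Matrix.mul_apply, Fin.sum_univ_two, Matrix.one_apply, hsym] at E00 E01 E10 E11
  set s00 := S 0 0 with h00
  set s01 := S 0 1 with h01
  set s11 := S 1 1 with h11
  set d := 6*β - t^2 with hd
  have hd3 : 3*β ≤ d := by rw [hd]; nlinarith
  have hd0 : 0 < d := by linarith
  have h1 : (s00^2+s01^2) * (a*d) = 3*β := by
    rw [hd]; linear_combination (3*β)*E00 + t*E01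
  have h2 : (s01*(s00+s11)) * (a*d) = t := by
    rw [hd]; linear_combination t*E00 + 2*E01
  have h3 : (s01^2+s11^2) * (a*d) = 2 := by
    rw [hd]; linear_combination t*E10 + 2*E11
  have hmv0 : S.mulVec w 0 = s00*w 0 + s01*w 1 := by
    simp [Matrix.mulVec, dotProduct, Fin.sum_univ_two, h00, h01]
  have hmv1 : S.mulVec w 1 = s01*w 0 + s11*w 1 := by
    simp [Matrix.mulVec, dotProduct, Fin.sum_univ_two, hsym, h11]
  rw [hmv0, hmv1]
  have hQ : ((s00*w 0 + s01*w 1)^2 + (s01*w 0 + s11*w 1)^2) * (a*d)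
      = 3*β*w 0^2 + 2*t*(w 0*w 1) + 2*w 1^2 := by
    linear_combination (w 0^2)*h1 + (2*(w 0*w 1))*h2 + (w 1^2)*h3
  rw [div_add_div _ _ (by positivity) (by positivity), div_le_iff₀ (by positivity)]
  have key : (w 0 ^ 2 * (6 * β * a) + w 1 ^ 2 * (4 * a)) * d
      ≤ (3*β*w 0^2 + 2*t*(w 0*w 1) + 2*w 1^2) * (24*β*a) := by
    have expand : (3*β*w 0^2 + 2*t*(w 0*w 1) + 2*w 1^2) * (24*β*a)
        - (w 0 ^ 2 * (6 * β * a) + w 1 ^ 2 * (4 * a)) * d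
        = a * ((36*β^2 + 6*β*t^2)*w 0^2 + 48*β*t*(w 0*w 1) + (24*β + 4*t^2)*w 1^2) := by
      rw [hd]; ring
    have inner0 : (0:ℝ) ≤ (36*β^2 + 6*β*t^2)*w 0^2 + 48*β*t*(w 0*w 1) + (24*β + 4*t^2)*w 1^2 := by
      have cert : (36*β^2 + 6*β*t^2)*w 0^2 + 48*β*t*(w 0*w 1) + (24*β + 4*t^2)*w 1^2
          = ((6*β*(6*β+t^2)*w 0 + 24*β*t*w 1)^2 + 24*β*((6*β-t^2)*w 1)^2)/(6*β*(6*β+t^2)) := by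
        rw [eq_div_iff (by positivity)]
        ring
      rw [cert]; positivity
    nlinarith [mul_nonneg ha.le inner0]
  have hval : ((s00*w 0 + s01*w 1)^2 + (s01*w 0 + s11*w 1)^2) * (4 * a * (6 * β * a))
      = ((3*β*w 0^2 + 2*t*(w 0*w 1) + 2*w 1^2) * (24*β*a)) / d := by
    rw [eq_div_iff hd0.ne']
    linear_combination (24*β*a)*hQ
  rw [hval, le_div_iff₀ hd0]
  calc (w 0 ^ 2 * (6 * β * a) + 4 * a * w 1 ^ 2) * d
      = (w 0 ^ 2 * (6 * β * a) + w 1 ^ 2 * (4 * a)) * d := by ring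
    _ ≤ _ := key

lemma gauss_tail_bound (K m q : ℝ) (hK : 0 ≤ K) (hq : 0 < q) (f : ℝ → ℝ)
    (hf0 : ∀ y ∈ Set.Ioi (0:ℝ), 0 ≤ f y)
    (hf : ∀ y ∈ Set.Ioi (0:ℝ), f y ≤ K * Real.exp (-(8*q)⁻¹ * (y-m)^2)) :
    ∫ y in Set.Ioi (0:ℝ), f y ≤ K * (6 * Real.sqrt q) := by
  have hb : (0:ℝ) < (8*q)⁻¹ := by positivity
  have hgi : Integrable (fun y : ℝ => K * Real.exp (-(8*q)⁻¹ * (y-m)^2)) := by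
    have h1 := (integrable_exp_neg_mul_sq hb).comp_sub_right m
    exact h1.const_mul K
  have step1 : ∫ y in Set.Ioi (0:ℝ), f y
      ≤ ∫ y in Set.Ioi (0:ℝ), K * Real.exp (-(8*q)⁻¹ * (y-m)^2) := by
    apply integral_mono_of_nonneg ?_ hgi.integrableOn ?_
    · rw [EventuallyLE, ae_restrict_iff' measurableSet_Ioi]
      exact ae_of_all _ hf0
    · rw [EventuallyLE, ae_restrict_iff' measurableSet_Ioi]
      exact ae_of_all _ hf
  have step2 : ∫ y in Set.Ioi (0:ℝ), K * Real.exp (-(8*q)⁻¹ * (y-m)^2)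
      ≤ ∫ y : ℝ, K * Real.exp (-(8*q)⁻¹ * (y-m)^2) :=
    setIntegral_le_integral hgi (ae_of_all _ fun y => by positivity)
  have hval : ∫ y : ℝ, K * Real.exp (-(8*q)⁻¹ * (y-m)^2)
      = K * Real.sqrt (π * (8*q)) := by
    rw [MeasureTheory.integral_const_mul]
    have := MeasureTheory.integral_sub_right_eq_self (μ := volume)
      (fun y : ℝ => Real.exp (-(8*q)⁻¹ * y^2)) m
    rw [this, integral_gaussian]
    rw [div_inv_eq_mul]
  have hfin : K * Real.sqrt (π * (8*q)) ≤ K * (6 * Real.sqrt q) := by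
    apply mul_le_mul_of_nonneg_left _ hK
    have h8 : π * (8*q) = (π*8) * q := by ring
    rw [h8, Real.sqrt_mul (by positivity)]
    apply mul_le_mul_of_nonneg_right _ (Real.sqrt_nonneg q)
    have : (π*8 : ℝ) ≤ 36 := by linarith [Real.pi_le_four]
    calc Real.sqrt (π*8) ≤ Real.sqrt 36 := Real.sqrt_le_sqrt this
      _ = 6 := by
        rw [show (36:ℝ) = 6^2 by norm_num, Real.sqrt_sq (by norm_num)]
  linarith [step1, step2, hval.le, hval.ge]


lemma inner_bound (n : ℕ) (β t u E a L : ℝ) (hβ1 : 1 ≤ β)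
    (ht3β : t^2 ≤ 3*β)
    (hu : u = β ^ (-(3:ℝ)/2)) (hE : E = Real.exp (-t^2/2))
    (ha : a = (2 : ℝ) ^ (-(5 : ℝ) / 2) * u * E)
    (hL : L = (n:ℝ) * u * E) (hL1 : 1 ≤ L)
    (S : Matrix (Fin 2) (Fin 2) ℝ) (hSH : S.IsHermitian)
    (hSS : S * S * sigmaTilde β t = 1) :
    (∫ y in Set.Ioi (0:ℝ),
        y * (sigmaTilde β t).det ^ (-(1:ℝ)/2) * phi2 (S.mulVec (![0,y] - muTilde n β t)))
      ≤ 6*Real.sqrt β * Real.exp (-(8:ℝ)⁻¹*t^2)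
        + 3*Real.sqrt L*(1+t^2)*Real.exp (-(L*t^2)/8) := by
  have hβ0 : (0:ℝ) < β := by linarith
  have hu0 : 0 < u := hu ▸ Real.rpow_pos_of_pos hβ0 _
  have hE0 : 0 < E := hE ▸ Real.exp_pos _
  set κ := (2:ℝ) ^ (-(5:ℝ)/2) with hκdef
  have hκ0 : 0 < κ := Real.rpow_pos_of_pos (by norm_num) _
  have hκ1 : κ ≤ 1 := Real.rpow_le_one_of_one_le_of_nonpos (by norm_num) (by norm_num)
  have hκ9 : (9:ℝ)⁻¹ ≤ κ := by
    have h25 : (2:ℝ) ^ ((5:ℝ)/2) ≤ 9 := by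
      calc (2:ℝ) ^ ((5:ℝ)/2) ≤ (2:ℝ) ^ ((3:ℕ):ℝ) :=
        Real.rpow_le_rpow_of_exponent_le (by norm_num) (by norm_num)
      _ = 8 := by rw [Real.rpow_natCast]; norm_num
      _ ≤ 9 := by norm_num
    have hpos : (0:ℝ) < (2:ℝ) ^ ((5:ℝ)/2) := Real.rpow_pos_of_pos (by norm_num) _
    have hADF : κ = ((2:ℝ) ^ ((5:ℝ)/2))⁻¹ := by
      rw [hκdef, show (-(5:ℝ)/2) = -((5:ℝ)/2) by norm_num, Real.rpow_neg (by norm_num : (0:ℝ) ≤ 2)]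
    rw [hADF]
    exact inv_anti₀ hpos h25
  have ha0 : 0 < a := by rw [ha]; exact mul_pos (mul_pos hκ0 hu0) hE0
  have hL0 : 0 < L := by linarith
  have hn0 : (0:ℝ) ≤ (n:ℝ) := Nat.cast_nonneg n
  -- determinant
  have hd0 : (0:ℝ) < 6*β - t^2 := by linarith
  have hd3 : 3*β ≤ 6*β - t^2 := by linarith
  have hSig : sigmaTilde β t = a • !![(2:ℝ), -t; -t, 3*β] := by
    rw [ha, hκdef, hu, hE]; rfl
  have hdet : (sigmaTilde β t).det = a^2*(6*β - t^2) := by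
    rw [hSig]
    simp [Matrix.det_fin_two]
    ring
  have hD0 : 0 < (sigmaTilde β t).det := by rw [hdet]; positivity
  set Dr := (sigmaTilde β t).det ^ (-(1:ℝ)/2) with hDrdef
  have hDr0 : 0 ≤ Dr := Real.rpow_nonneg hD0.le _
  have hsqβ3 : 0 < Real.sqrt (3*β) := Real.sqrt_pos.mpr (by linarith)
  have hDrle : Dr ≤ (a * Real.sqrt (3*β))⁻¹ := by
    have h1 : Dr = (Real.sqrt ((sigmaTilde β t).det))⁻¹ := by
      rw [hDrdef, show (-(1:ℝ)/2) = -(1/2) by norm_num, Real.rpow_neg hD0.le,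
        ← Real.sqrt_eq_rpow]
    rw [h1]
    apply inv_anti₀ (by positivity)
    rw [hdet, Real.sqrt_mul (sq_nonneg a), Real.sqrt_sq ha0.le]
    exact mul_le_mul_of_nonneg_left (Real.sqrt_le_sqrt hd3) ha0.le
  -- mean quantities
  set M2 := Real.sqrt n * u * E with hM2def
  have hM20 : 0 ≤ M2 := by positivity
  set m := M2 * (1 - t^2) with hmdef
  set q := 3*β*a with hqdef
  have hq0 : 0 < q := by positivity
  -- the constant K
  set K := Dr * (2*π)⁻¹ * Real.exp (-(M2*t)^2/(8*a)) * (3*Real.sqrt q + |m|) with hKdef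
  have hK0 : 0 ≤ K := by positivity
  -- pointwise bound
  have hpt : ∀ y ∈ Set.Ioi (0:ℝ),
      y * (sigmaTilde β t).det ^ (-(1:ℝ)/2) * phi2 (S.mulVec (![0,y] - muTilde n β t))
        ≤ K * Real.exp (-(8*q)⁻¹ * (y-m)^2) := by
    intro y hy
    have hy0 : 0 < y := hy
    set w : Fin 2 → ℝ := ![0,y] - muTilde n β t with hwdef
    have hw0 : w 0 = -(M2*t) := by
      rw [hwdef]
      simp [muTilde, hM2def, hu, hE]
    have hw1 : w 1 = y - m := by
      rw [hwdef, hmdef]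
      simp [muTilde, hM2def, hu, hE]
    have hsym : S 1 0 = S 0 1 := by
      have h := hSH.apply 0 1
      simpa using h
    have hquad := quad_bound β t a hβ0 ha0 ht3β S hsym (by rw [← hSig]; exact hSS) w
    have hphi : phi2 (S.mulVec w)
        ≤ (2*π)⁻¹ * (Real.exp (-(M2*t)^2/(8*a)) * Real.exp (-(y-m)^2/(12*β*a))) := by
      rw [phi2]
      apply mul_le_mul_of_nonneg_left _ (by positivity)
      rw [← Real.exp_add]
      apply Real.exp_le_exp.mpr
      rw [hw0, hw1] at hquad
      have hns : (-(M2*t))^2 = (M2*t)^2 := by ring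
      rw [hns] at hquad
      have harg : (M2*t)^2/(8*a) + (y-m)^2/(12*β*a)
          ≤ ((S.mulVec w 0)^2 + (S.mulVec w 1)^2)/2 := by
        have h2 : (M2*t)^2/(8*a) = ((M2*t)^2/(4*a))/2 := by ring
        have h3 : (y-m)^2/(12*β*a) = ((y-m)^2/(6*β*a))/2 := by ring
        rw [h2, h3]
        linarith [hquad]
      have hre : -(M2*t)^2/(8*a) + -(y-m)^2/(12*β*a)
          = -((M2*t)^2/(8*a) + (y-m)^2/(12*β*a)) := by ring
      rw [hre]
      have hre2 : -((S.mulVec w 0)^2 + (S.mulVec w 1)^2)/2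
          = -(((S.mulVec w 0)^2 + (S.mulVec w 1)^2)/2) := by ring
      rw [hre2]
      linarith [harg]
    -- y * exp bound
    have hyexp : y * Real.exp (-(y-m)^2/(12*β*a))
        ≤ (3*Real.sqrt q + |m|) * Real.exp (-(y-m)^2/(8*q)) := by
      have h4q : 12*β*a = 4*q := by rw [hqdef]; ring
      rw [h4q]
      have hy_le : y ≤ |y-m| + |m| := by
        calc y = (y-m) + m := by ring
        _ ≤ |y-m| + |m| := add_le_add (le_abs_self _) (le_abs_self _)
      have habs : |y-m| * Real.exp (-(y-m)^2/(4*q)) ≤ 3*Real.sqrt q * Real.exp (-(y-m)^2/(8*q)) := by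
        have key : |y-m| ≤ 3*Real.sqrt q * Real.exp ((y-m)^2/(8*q)) := by
          have h1 : |y-m| = Real.sqrt (8*q) * Real.sqrt ((y-m)^2/(8*q)) := by
            rw [← Real.sqrt_mul (by positivity), mul_div_cancel₀ _ (by positivity : (8*q:ℝ) ≠ 0),
              Real.sqrt_sq_eq_abs]
          rw [h1]
          apply mul_le_mul ?_ (sqrt_le_exp (by positivity)) (Real.sqrt_nonneg _) (by positivity)
          calc Real.sqrt (8*q) = Real.sqrt 8 * Real.sqrt q := Real.sqrt_mul (by norm_num) q
            _ ≤ 3 * Real.sqrt q := by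
              apply mul_le_mul_of_nonneg_right _ (Real.sqrt_nonneg q)
              calc Real.sqrt 8 ≤ Real.sqrt 9 := Real.sqrt_le_sqrt (by norm_num)
                _ = 3 := by rw [show (9:ℝ) = 3^2 by norm_num, Real.sqrt_sq (by norm_num)]
        calc |y-m| * Real.exp (-(y-m)^2/(4*q))
            ≤ (3*Real.sqrt q * Real.exp ((y-m)^2/(8*q))) * Real.exp (-(y-m)^2/(4*q)) :=
              mul_le_mul_of_nonneg_right key (Real.exp_pos _).le
          _ = 3*Real.sqrt q * Real.exp ((y-m)^2/(8*q) + -(y-m)^2/(4*q)) := by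
              rw [Real.exp_add]; ring
          _ ≤ 3*Real.sqrt q * Real.exp (-(y-m)^2/(8*q)) := by
              apply mul_le_mul_of_nonneg_left _ (by positivity)
              apply Real.exp_le_exp.mpr
              have : (y-m)^2/(8*q) + -(y-m)^2/(4*q) = -(y-m)^2/(8*q) := by ring
              rw [this]
        -- done
      have hm2 : |m| * Real.exp (-(y-m)^2/(4*q)) ≤ |m| * Real.exp (-(y-m)^2/(8*q)) := by
        apply mul_le_mul_of_nonneg_left _ (abs_nonneg m)
        apply Real.exp_le_exp.mpr
        rw [neg_div, neg_div, neg_le_neg_iff,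
          div_le_div_iff₀ (by positivity) (by positivity)]
        have hqq := mul_nonneg (sq_nonneg (y-m)) hq0.le
        linarith
      calc y * Real.exp (-(y-m)^2/(4*q))
          ≤ (|y-m| + |m|) * Real.exp (-(y-m)^2/(4*q)) :=
            mul_le_mul_of_nonneg_right hy_le (Real.exp_pos _).le
        _ = |y-m| * Real.exp (-(y-m)^2/(4*q)) + |m| * Real.exp (-(y-m)^2/(4*q)) := by ring
        _ ≤ 3*Real.sqrt q * Real.exp (-(y-m)^2/(8*q)) + |m| * Real.exp (-(y-m)^2/(8*q)) := by
            exact add_le_add habs hm2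
        _ = (3*Real.sqrt q + |m|) * Real.exp (-(y-m)^2/(8*q)) := by ring
    have hexparg : -(8*q)⁻¹ * (y-m)^2 = -(y-m)^2/(8*q) := by ring
    rw [hexparg]
    calc y * (sigmaTilde β t).det ^ (-(1:ℝ)/2) * phi2 (S.mulVec w)
        ≤ y * Dr * ((2*π)⁻¹ * (Real.exp (-(M2*t)^2/(8*a)) * Real.exp (-(y-m)^2/(12*β*a)))) := by
          apply mul_le_mul_of_nonneg_left hphi (by positivity)
      _ = Dr * (2*π)⁻¹ * Real.exp (-(M2*t)^2/(8*a)) * (y * Real.exp (-(y-m)^2/(12*β*a))) := by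
          ring
      _ ≤ Dr * (2*π)⁻¹ * Real.exp (-(M2*t)^2/(8*a)) *
            ((3*Real.sqrt q + |m|) * Real.exp (-(y-m)^2/(8*q))) := by
          apply mul_le_mul_of_nonneg_left hyexp (by positivity)
      _ = K * Real.exp (-(y-m)^2/(8*q)) := by rw [hKdef]; ring
  have hnonneg : ∀ y ∈ Set.Ioi (0:ℝ),
      0 ≤ y * (sigmaTilde β t).det ^ (-(1:ℝ)/2) * phi2 (S.mulVec (![0,y] - muTilde n β t)) := by
    intro y hy
    have : (0:ℝ) < y := hy
    exact mul_nonneg (mul_nonneg this.le hDr0) (phi2_nonneg _)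
  have hmain := gauss_tail_bound K m q hK0 hq0 _ hnonneg hpt
  -- now bound K * (6 √q)
  have hq_split : Real.sqrt q = Real.sqrt (3*β) * Real.sqrt a := by
    rw [hqdef, Real.sqrt_mul (by positivity)]
  have hsa0 : 0 < Real.sqrt a := Real.sqrt_pos.mpr ha0
  have hDr3q : Dr * (3*q) ≤ 6 * Real.sqrt β := by
    calc Dr * (3*q) ≤ (a * Real.sqrt (3*β))⁻¹ * (3*q) :=
        mul_le_mul_of_nonneg_right hDrle (by positivity)
      _ = 9*β / Real.sqrt (3*β) := by
          rw [hqdef]; field_simp; ring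
      _ ≤ 6 * Real.sqrt β := by
          rw [div_le_iff₀ hsqβ3]
          have h1 : Real.sqrt (3*β) = Real.sqrt 3 * Real.sqrt β := Real.sqrt_mul (by norm_num) β
          have h2 : Real.sqrt β * Real.sqrt β = β := Real.mul_self_sqrt hβ0.le
          have h3 : (3:ℝ)/2 ≤ Real.sqrt 3 := by
            rw [show (3:ℝ)/2 = Real.sqrt (((3:ℝ)/2)^2) from (Real.sqrt_sq (by norm_num)).symm]
            apply Real.sqrt_le_sqrt
            norm_num
          have e4 : 6*Real.sqrt β*Real.sqrt (3*β) = 6*Real.sqrt 3*β := by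
            rw [h1]
            calc 6*Real.sqrt β*(Real.sqrt 3*Real.sqrt β) = 6*Real.sqrt 3*(Real.sqrt β*Real.sqrt β) := by ring
              _ = 6*Real.sqrt 3*β := by rw [h2]
          rw [e4]
          have h5 := mul_le_mul_of_nonneg_right h3 hβ0.le
          linarith
  have hDrmq : Dr * (|m| * Real.sqrt q) ≤ 3*Real.sqrt L*(1+t^2) := by
    have hstep1 : Dr * (|m| * Real.sqrt q) ≤ |m| * (Real.sqrt a)⁻¹ := by
      calc Dr * (|m| * Real.sqrt q) ≤ (a * Real.sqrt (3*β))⁻¹ * (|m| * Real.sqrt q) :=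
          mul_le_mul_of_nonneg_right hDrle (by positivity)
        _ = |m| * (Real.sqrt a / a) := by
            rw [hq_split]
            field_simp
        _ = |m| * (Real.sqrt a)⁻¹ := by
            rw [Real.sqrt_div_self', one_div]
    have hm_le : |m| ≤ M2 * (1+t^2) := by
      rw [hmdef, abs_mul, abs_of_nonneg hM20]
      apply mul_le_mul_of_nonneg_left _ hM20
      exact abs_le.mpr ⟨by linarith [sq_nonneg t], by linarith [sq_nonneg t]⟩
    have hM2a : M2 * (Real.sqrt a)⁻¹ ≤ 3 * Real.sqrt L := by
      rw [mul_inv_le_iff₀ hsa0]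
      have hsq : M2^2 ≤ (3 * Real.sqrt L * Real.sqrt a)^2 := by
        have e1 : M2^2 = (n:ℝ)*(u*E)^2 := by
          rw [hM2def, mul_pow, mul_pow, Real.sq_sqrt hn0]; ring
        have e2 : (3 * Real.sqrt L * Real.sqrt a)^2 = 9*(L*a) := by
          rw [mul_pow, mul_pow, Real.sq_sqrt hL0.le, Real.sq_sqrt ha0.le]; ring
        have e3 : L*a = κ*((n:ℝ)*(u*E)^2) := by rw [hL, ha]; ring
        rw [e1, e2, e3]
        have hXn := mul_nonneg hn0 (sq_nonneg (u*E))
        have h9 := mul_le_mul_of_nonneg_right hκ9 hXn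
        linarith
      calc M2 = Real.sqrt (M2^2) := (Real.sqrt_sq hM20).symm
        _ ≤ Real.sqrt ((3 * Real.sqrt L * Real.sqrt a)^2) := Real.sqrt_le_sqrt hsq
        _ = 3 * Real.sqrt L * Real.sqrt a := Real.sqrt_sq (by positivity)
    calc Dr * (|m| * Real.sqrt q) ≤ |m| * (Real.sqrt a)⁻¹ := hstep1
      _ ≤ (M2 * (1+t^2)) * (Real.sqrt a)⁻¹ := by
          apply mul_le_mul_of_nonneg_right hm_le (by positivity)
      _ = (M2 * (Real.sqrt a)⁻¹) * (1+t^2) := by ring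
      _ ≤ (3 * Real.sqrt L) * (1+t^2) := by
          apply mul_le_mul_of_nonneg_right hM2a (by positivity)
      _ = 3*Real.sqrt L*(1+t^2) := by ring
  -- exponent bound
  have hexp1 : Real.exp (-(M2*t)^2/(8*a)) ≤ Real.exp (-(L*t^2)/8) := by
    apply Real.exp_le_exp.mpr
    have e1 : (M2*t)^2 = (n:ℝ)*(u*E)^2*t^2 := by
      rw [hM2def, mul_pow, mul_pow, mul_pow, Real.sq_sqrt hn0]; ring
    rw [neg_div, neg_div, neg_le_neg_iff, e1, ha]
    have hval : (n:ℝ)*(u*E)^2*t^2/(8*(κ*u*E)) = (L*t^2/8)*κ⁻¹ := by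
      rw [hL]; field_simp
    rw [hval]
    have h1κ : (1:ℝ) ≤ κ⁻¹ := by
      have := inv_anti₀ hκ0 hκ1
      simpa using this
    calc L*t^2/8 = (L*t^2/8) * 1 := by ring
      _ ≤ (L*t^2/8)*κ⁻¹ := by
          apply mul_le_mul_of_nonneg_left h1κ (by positivity)
  have hexp2 : Real.exp (-(L*t^2)/8) ≤ Real.exp (-(8:ℝ)⁻¹*t^2) := by
    apply Real.exp_le_exp.mpr
    have h1 : t^2 ≤ L*t^2 := by
      have := mul_le_mul_of_nonneg_right hL1 (sq_nonneg t)
      linarith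
    have h2 : -(8:ℝ)⁻¹*t^2 = -(t^2)/8 := by ring
    rw [h2, neg_div, neg_div, neg_le_neg_iff]
    linarith
  -- assemble
  have hfinal : K * (6 * Real.sqrt q)
      ≤ 6*Real.sqrt β * Real.exp (-(8:ℝ)⁻¹*t^2) + 3*Real.sqrt L*(1+t^2)*Real.exp (-(L*t^2)/8) := by
    have hπ : 6 * (2*π)⁻¹ ≤ 1 := by
      rw [mul_inv_le_iff₀ (by positivity)]
      linarith [Real.pi_gt_three]
    have hsqq : Real.sqrt q * Real.sqrt q = q := Real.mul_self_sqrt hq0.le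
    have e1 : K * (6 * Real.sqrt q)
        = (6 * (2*π)⁻¹) * (Real.exp (-(M2*t)^2/(8*a)) * (Dr * (3*q) + Dr * (|m| * Real.sqrt q))) := by
      rw [hKdef]
      linear_combination (6*(2*π)⁻¹*Real.exp (-(M2*t)^2/(8*a))*Dr*3) * hsqq
    have hZ0 : 0 ≤ Real.exp (-(M2*t)^2/(8*a)) * (Dr * (3*q) + Dr * (|m| * Real.sqrt q)) := by
      positivity
    have step : K * (6 * Real.sqrt q)
        ≤ Real.exp (-(M2*t)^2/(8*a)) * (Dr * (3*q) + Dr * (|m| * Real.sqrt q)) := by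
      rw [e1]
      exact mul_le_of_le_one_left hZ0 hπ
    have piece1 : Real.exp (-(M2*t)^2/(8*a)) * (Dr * (3*q))
        ≤ 6*Real.sqrt β * Real.exp (-(8:ℝ)⁻¹*t^2) := by
      calc Real.exp (-(M2*t)^2/(8*a)) * (Dr * (3*q))
          ≤ Real.exp (-(8:ℝ)⁻¹*t^2) * (6*Real.sqrt β) :=
            mul_le_mul (hexp1.trans hexp2) hDr3q (by positivity) (Real.exp_pos _).le
        _ = 6*Real.sqrt β * Real.exp (-(8:ℝ)⁻¹*t^2) := by ring
    have piece2 : Real.exp (-(M2*t)^2/(8*a)) * (Dr * (|m| * Real.sqrt q))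
        ≤ 3*Real.sqrt L*(1+t^2)*Real.exp (-(L*t^2)/8) := by
      calc Real.exp (-(M2*t)^2/(8*a)) * (Dr * (|m| * Real.sqrt q))
          ≤ Real.exp (-(L*t^2)/8) * (3*Real.sqrt L*(1+t^2)) :=
            mul_le_mul hexp1 hDrmq (by positivity) (Real.exp_pos _).le
        _ = 3*Real.sqrt L*(1+t^2)*Real.exp (-(L*t^2)/8) := by ring
    calc K * (6 * Real.sqrt q)
        ≤ Real.exp (-(M2*t)^2/(8*a)) * (Dr * (3*q) + Dr * (|m| * Real.sqrt q)) := step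
      _ = Real.exp (-(M2*t)^2/(8*a)) * (Dr * (3*q))
          + Real.exp (-(M2*t)^2/(8*a)) * (Dr * (|m| * Real.sqrt q)) := by ring
      _ ≤ _ := add_le_add piece1 piece2
  calc (∫ y in Set.Ioi (0:ℝ),
        y * (sigmaTilde β t).det ^ (-(1:ℝ)/2) * phi2 (S.mulVec (![0,y] - muTilde n β t)))
      ≤ K * (6 * Real.sqrt q) := hmain
    _ ≤ _ := hfinal

lemma Bpart (L L₀ t δ : ℝ) (hL1 : 1 ≤ L) (hLL₀ : L ≤ L₀)
    (hδ : δ = (Real.sqrt L₀)⁻¹) :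
    3*Real.sqrt L*(1+t^2)*Real.exp (-(L*t^2)/8) ≤ 432 * (|t|+δ)⁻¹ := by
  have hL0 : (0:ℝ) < L := by linarith
  have hL₀0 : (0:ℝ) < L₀ := by linarith
  have hsL₀ : 0 < Real.sqrt L₀ := Real.sqrt_pos.mpr hL₀0
  have hδ0 : 0 < δ := by rw [hδ]; positivity
  have hpos : 0 < |t| + δ := by positivity
  rw [show (432:ℝ) * (|t|+δ)⁻¹ = 432/(|t|+δ) by ring, le_div_iff₀ hpos]
  set x := L*t^2/24 with hxdef
  have hx0 : 0 ≤ x := by positivity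
  have hexp : Real.exp (-(L*t^2)/8) = Real.exp (-x) * Real.exp (-x) * Real.exp (-x) := by
    rw [← Real.exp_add, ← Real.exp_add]
    congr 1
    rw [hxdef]; ring
  have hb1 : Real.sqrt L * |t| * Real.exp (-x) ≤ 5 := by
    have h1 : Real.sqrt L * |t| = Real.sqrt (24*x) := by
      rw [hxdef, show 24*(L*t^2/24) = L*t^2 by ring, Real.sqrt_mul hL0.le,
        Real.sqrt_sq_eq_abs]
    have h2 : Real.sqrt (24*x) ≤ 5 * Real.sqrt x := by
      rw [Real.sqrt_mul (by norm_num)]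
      apply mul_le_mul_of_nonneg_right _ (Real.sqrt_nonneg x)
      calc Real.sqrt 24 ≤ Real.sqrt 25 := Real.sqrt_le_sqrt (by norm_num)
        _ = 5 := by rw [show (25:ℝ) = 5^2 by norm_num, Real.sqrt_sq (by norm_num)]
    have h3 : Real.sqrt x ≤ Real.exp x := sqrt_le_exp hx0
    calc Real.sqrt L * |t| * Real.exp (-x) = Real.sqrt (24*x) * Real.exp (-x) := by rw [h1]
      _ ≤ (5 * Real.exp x) * Real.exp (-x) := by
          apply mul_le_mul_of_nonneg_right _ (Real.exp_pos _).le
          calc Real.sqrt (24*x) ≤ 5 * Real.sqrt x := h2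
            _ ≤ 5 * Real.exp x := by linarith [h3]
      _ = 5 := by rw [mul_assoc, ← Real.exp_add]; simp
  have hb2 : Real.sqrt L * δ * Real.exp (-x) ≤ 1 := by
    have h1 : Real.sqrt L * δ ≤ 1 := by
      rw [hδ, mul_inv_le_iff₀ hsL₀, one_mul]
      exact Real.sqrt_le_sqrt hLL₀
    have h2 : Real.exp (-x) ≤ 1 := Real.exp_le_one_iff.mpr (by linarith)
    calc Real.sqrt L * δ * Real.exp (-x) ≤ 1 * 1 :=
        mul_le_mul h1 h2 (Real.exp_pos _).le (by norm_num)
      _ = 1 := by norm_num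
  have hb3 : (1+t^2) * Real.exp (-x) ≤ 24 := by
    have h1 : 1 + t^2 ≤ 24 * Real.exp x := by
      have h2 : t^2 ≤ L*t^2 := by
        have := mul_le_mul_of_nonneg_right hL1 (sq_nonneg t)
        linarith
      have h3 : 1 + x ≤ Real.exp x := by linarith [Real.add_one_le_exp x]
      have h4 : 1 + t^2 ≤ 24*(1+x) := by rw [hxdef]; linarith
      calc 1 + t^2 ≤ 24*(1+x) := h4
        _ ≤ 24 * Real.exp x := by linarith [h3]
    calc (1+t^2) * Real.exp (-x) ≤ (24 * Real.exp x) * Real.exp (-x) :=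
        mul_le_mul_of_nonneg_right h1 (Real.exp_pos _).le
      _ = 24 := by rw [mul_assoc, ← Real.exp_add]; simp
  have hb12 : Real.sqrt L * (|t|+δ) * Real.exp (-x) ≤ 6 := by
    have : Real.sqrt L * (|t|+δ) * Real.exp (-x)
        = Real.sqrt L * |t| * Real.exp (-x) + Real.sqrt L * δ * Real.exp (-x) := by ring
    rw [this]; linarith
  have hx3 : Real.exp (-x) ≤ 1 := Real.exp_le_one_iff.mpr (by linarith)
  calc 3*Real.sqrt L*(1+t^2)*Real.exp (-(L*t^2)/8) * (|t|+δ)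
      = 3 * ((Real.sqrt L * (|t|+δ) * Real.exp (-x)) * ((1+t^2) * Real.exp (-x)) * Real.exp (-x)) := by
        rw [hexp]; ring
    _ ≤ 3 * (6 * 24 * 1) := by
        apply mul_le_mul_of_nonneg_left _ (by norm_num : (0:ℝ) ≤ 3)
        have p2 : 0 ≤ (1+t^2) * Real.exp (-x) := by positivity
        exact mul_le_mul (mul_le_mul hb12 hb3 p2 (by norm_num)) hx3
          (Real.exp_pos _).le (by norm_num)
    _ = 432 := by norm_num

lemma sigmaTilde_posdef (β t : ℝ) (hβ : 0 < β) (ht : t^2 ≤ 3*β) :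
    (sigmaTilde β t).PosDef := by
  have ha : (0:ℝ) < (2 : ℝ) ^ (-(5 : ℝ) / 2) * β ^ (-(3 : ℝ) / 2) * Real.exp (-t ^ 2 / 2) := by
    positivity
  set a := (2 : ℝ) ^ (-(5 : ℝ) / 2) * β ^ (-(3 : ℝ) / 2) * Real.exp (-t ^ 2 / 2) with hadef
  rw [Matrix.posDef_iff_dotProduct_mulVec]
  constructor
  · show (sigmaTilde β t)ᴴ = sigmaTilde β t
    ext i j
    fin_cases i <;> fin_cases j <;>
      simp [sigmaTilde, Matrix.conjTranspose_apply]
  · intro x hx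
    have hx01 : x 0 ≠ 0 ∨ x 1 ≠ 0 := by
      by_contra h
      push_neg at h
      exact hx (funext fun i => by fin_cases i <;> simp [h.1, h.2])
    have hquad : star x ⬝ᵥ (sigmaTilde β t).mulVec x
        = a * (2*(x 0)^2 - 2*t*(x 0 * x 1) + 3*β*(x 1)^2) := by
      simp [sigmaTilde, Matrix.mulVec, dotProduct, Fin.sum_univ_two]
      ring
    rw [hquad]
    apply mul_pos ha
    rcases hx01 with h | h
    · rcases eq_or_ne (x 1) 0 with h1 | h1
      · rw [h1]; nlinarith [sq_pos_of_ne_zero h]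
      · nlinarith [sq_nonneg (2*x 0 - t*x 1), sq_pos_of_ne_zero h1]
    · nlinarith [sq_nonneg (2*x 0 - t*x 1), sq_pos_of_ne_zero h]

lemma integral_inv_abs_add (R δ : ℝ) (hR : 0 ≤ R) (hδ : 0 < δ) :
    ∫ t in Set.Icc (-R) R, (|t|+δ)⁻¹ = 2 * Real.log ((R+δ)/δ) := by
  have hcont : Continuous (fun t : ℝ => (|t|+δ)⁻¹) := by
    apply Continuous.inv₀ (by continuity)
    intro t; positivity
  have hII : ∀ u v : ℝ, IntervalIntegrable (fun t : ℝ => (|t|+δ)⁻¹) volume u v :=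
    fun u v => hcont.intervalIntegrable u v
  have half : ∫ t in (0:ℝ)..R, (|t|+δ)⁻¹ = Real.log ((R+δ)/δ) := by
    have : ∫ t in (0:ℝ)..R, (|t|+δ)⁻¹ = ∫ t in (0:ℝ)..R, (t+δ)⁻¹ := by
      apply intervalIntegral.integral_congr
      intro t htt
      rw [Set.uIcc_of_le hR] at htt
      simp only [abs_of_nonneg htt.1]
    rw [this]
    have comp := intervalIntegral.integral_comp_add_right (a := (0:ℝ)) (b := R)
      (fun u : ℝ => u⁻¹) δ
    rw [comp, zero_add]
    apply integral_inv
    rw [Set.uIcc_of_le (by linarith)]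
    intro hmem
    exact absurd hmem.1 (by linarith)
  have neghalf : ∫ t in (-R:ℝ)..0, (|t|+δ)⁻¹ = Real.log ((R+δ)/δ) := by
    have comp := intervalIntegral.integral_comp_neg (a := (-R:ℝ)) (b := 0)
      (fun t : ℝ => (|t|+δ)⁻¹)
    simp only [abs_neg, neg_zero, neg_neg] at comp
    rw [comp, half]
  rw [MeasureTheory.integral_Icc_eq_integral_Ioc,
    ← intervalIntegral.integral_of_le (by linarith : -R ≤ R),
    ← intervalIntegral.integral_add_adjacent_intervals (hII (-R) 0) (hII 0 R),
    half, neghalf]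
  ring

/-- Under `n^c ≤ β ≤ n^(2−c)` and `β ≤ n^(2/3)`, the matrices
`Σ̃_t` are positive definite on `T'` and the Gaussian Kac–Rice integral over
`T' = [−√(2 log n − 3 log β), √(2 log n − 3 log β)]` is `O(√β)`. Here `S t` is
`Σ̃_t^(−1/2)`, characterized by `S t` positive definite and `S t · S t · Σ̃_t = 1`. -/
theorem kacRice_gaussian_integral_Tprime (c : ℝ) (hc0 : 0 < c) (hc1 : c < 1) :
    ∃ C > (0 : ℝ), ∃ N : ℕ, ∀ n : ℕ, N ≤ n → ∀ β : ℝ,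
      (n : ℝ) ^ c ≤ β → β ≤ (n : ℝ) ^ (2 - c) → β ≤ (n : ℝ) ^ ((2 : ℝ) / 3) →
      (∀ t ∈ Set.Icc (-(Real.sqrt (2 * Real.log n - 3 * Real.log β)))
          (Real.sqrt (2 * Real.log n - 3 * Real.log β)),
        (sigmaTilde β t).PosDef) ∧
      ∀ S : ℝ → Matrix (Fin 2) (Fin 2) ℝ,
        (∀ t ∈ Set.Icc (-(Real.sqrt (2 * Real.log n - 3 * Real.log β)))
            (Real.sqrt (2 * Real.log n - 3 * Real.log β)),
          (S t).PosDef ∧ S t * S t * sigmaTilde β t = 1) →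
        (∫ t in Set.Icc (-(Real.sqrt (2 * Real.log n - 3 * Real.log β)))
            (Real.sqrt (2 * Real.log n - 3 * Real.log β)),
          ∫ y in Set.Ioi (0 : ℝ),
            y * (sigmaTilde β t).det ^ (-(1 : ℝ) / 2) *
              phi2 ((S t).mulVec (![0, y] - muTilde n β t))) ≤
          C * Real.sqrt β := by
  have hlog : ∀ᶠ (x:ℝ) in atTop, 2592 * Real.log x ≤ x ^ (c/2) := by
    have h := isLittleO_log_rpow_atTop (by positivity : 0 < c/2)
    have hb := h.def (by norm_num : (0:ℝ) < 1/2592)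
    filter_upwards [hb, eventually_ge_atTop (1:ℝ)] with x hx hx1
    rw [Real.norm_eq_abs, Real.norm_eq_abs, abs_of_nonneg (Real.log_nonneg hx1),
      abs_of_nonneg (Real.rpow_nonneg (by linarith) _)] at hx
    linarith
  obtain ⟨N₀, hN₀⟩ := Filter.eventually_atTop.mp
    (tendsto_natCast_atTop_atTop.eventually hlog)
  refine ⟨37, by norm_num, max N₀ 2, ?_⟩
  intro n hn β hβl hβu hβu23
  clear hβu
  have hn2 : (2:ℕ) ≤ n := le_trans (le_max_right _ _) hn
  have hn1 : (1:ℝ) ≤ (n:ℝ) := by exact_mod_cast le_trans (by norm_num) hn2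
  have hn2R : (2:ℝ) ≤ (n:ℝ) := by exact_mod_cast hn2
  have hn0 : (0:ℝ) < (n:ℝ) := by linarith
  have hlogn : 2592 * Real.log n ≤ (n:ℝ)^(c/2) := hN₀ n (le_trans (le_max_left _ _) hn)
  have hβ1 : (1:ℝ) ≤ β := by
    calc (1:ℝ) = (n:ℝ)^(0:ℝ) := (Real.rpow_zero _).symm
      _ ≤ (n:ℝ)^c := Real.rpow_le_rpow_of_exponent_le hn1 hc0.le
      _ ≤ β := hβl
  have hβ0 : (0:ℝ) < β := by linarith
  have hlogβ0 : 0 ≤ Real.log β := Real.log_nonneg hβ1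
  have hlogn0 : 0 ≤ Real.log n := Real.log_nonneg hn1
  set R := Real.sqrt (2 * Real.log n - 3 * Real.log β) with hRdef
  have hRR : 0 ≤ 2 * Real.log n - 3 * Real.log β := by
    have h1 : Real.log β ≤ Real.log ((n:ℝ) ^ ((2:ℝ)/3)) :=
      Real.log_le_log hβ0 hβu23
    rw [Real.log_rpow hn0] at h1
    linarith
  have hR0 : 0 ≤ R := Real.sqrt_nonneg _
  have ht2R : ∀ t ∈ Set.Icc (-R) R, t^2 ≤ 2 * Real.log n - 3 * Real.log β := by
    intro t ht
    have habs : |t| ≤ R := abs_le.mpr ⟨ht.1, ht.2⟩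
    calc t^2 = |t|^2 := (sq_abs t).symm
      _ ≤ R^2 := by nlinarith [abs_nonneg t]
      _ = 2 * Real.log n - 3 * Real.log β := Real.sq_sqrt hRR
  have hncle : (n:ℝ)^(c/2) ≤ (n:ℝ)^c := Real.rpow_le_rpow_of_exponent_le hn1 (by linarith)
  have hlog2n : 2 * Real.log n ≤ β := by
    have h1 : 2 * Real.log n ≤ 2592 * Real.log n := by linarith
    calc 2 * Real.log n ≤ (n:ℝ)^(c/2) := by linarith
      _ ≤ (n:ℝ)^c := hncle
      _ ≤ β := hβl
  have ht3β : ∀ t ∈ Set.Icc (-R) R, t^2 ≤ 3*β := by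
    intro t ht
    have := ht2R t ht
    linarith
  constructor
  · exact fun t ht => sigmaTilde_posdef β t hβ0 (ht3β t ht)
  intro S hS
  -- abbreviations
  set u := β ^ (-(3:ℝ)/2) with hudef
  have hu0 : 0 < u := Real.rpow_pos_of_pos hβ0 _
  have hu1 : u ≤ 1 := Real.rpow_le_one_of_one_le_of_nonpos hβ1 (by norm_num)
  have huβ : u * β ^ ((3:ℝ)/2) = 1 := by
    rw [hudef, ← Real.rpow_add hβ0]
    norm_num
  have hβ32pos : 0 < β ^ ((3:ℝ)/2) := Real.rpow_pos_of_pos hβ0 _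
  have hβ32n : β ^ ((3:ℝ)/2) ≤ (n:ℝ) := by
    calc β ^ ((3:ℝ)/2) ≤ ((n:ℝ) ^ ((2:ℝ)/3)) ^ ((3:ℝ)/2) :=
        Real.rpow_le_rpow hβ0.le hβu23 (by norm_num)
      _ = (n:ℝ) := by
        rw [← Real.rpow_mul hn0.le]
        norm_num
  set L₀ := (n:ℝ) * u with hL₀def
  have hL₀pos : 0 < L₀ := by positivity
  have hL₀1 : 1 ≤ L₀ := by
    calc (1:ℝ) = u * β^((3:ℝ)/2) := huβ.symm
      _ ≤ u * (n:ℝ) := mul_le_mul_of_nonneg_left hβ32n hu0.le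
      _ = L₀ := by rw [hL₀def]; ring
  set δ := (Real.sqrt L₀)⁻¹ with hδdef
  have hsL₀1 : 1 ≤ Real.sqrt L₀ := by
    rw [show (1:ℝ) = Real.sqrt 1 by simp]
    exact Real.sqrt_le_sqrt hL₀1
  have hδ0 : 0 < δ := by rw [hδdef]; positivity
  -- the majorant
  set G := fun t:ℝ => 6 * Real.sqrt β * Real.exp (-(8:ℝ)⁻¹ * t^2) + 432 * (|t|+δ)⁻¹
    with hGdef
  have hGcont : Continuous G := by
    rw [hGdef]
    apply Continuous.add
    · exact (continuous_const.mul (Real.continuous_exp.comp (by continuity)))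
    · apply Continuous.mul continuous_const
      apply Continuous.inv₀ (by continuity)
      intro t
      have := abs_nonneg t
      positivity
  have hGint : IntegrableOn G (Set.Icc (-R) R) := hGcont.integrableOn_Icc
  -- pointwise bound
  have hkey : ∀ t ∈ Set.Icc (-R) R,
      (∫ y in Set.Ioi (0:ℝ),
        y * (sigmaTilde β t).det ^ (-(1:ℝ)/2) * phi2 ((S t).mulVec (![0,y] - muTilde n β t)))
        ≤ G t := by
    intro t ht
    obtain ⟨hSpd, hSeq⟩ := hS t ht
    set E := Real.exp (-t^2/2) with hEdef
    have hE0 : 0 < E := Real.exp_pos _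
    have hE1 : E ≤ 1 := Real.exp_le_one_iff.mpr (by nlinarith [sq_nonneg t])
    set L := (n:ℝ) * u * E with hLdef
    have hL1 : 1 ≤ L := by
      have h1 : Real.exp (-(2 * Real.log n - 3 * Real.log β)/2) ≤ E := by
        rw [hEdef]
        apply Real.exp_le_exp.mpr
        have := ht2R t ht
        linarith
      have h2 : Real.exp (-(2 * Real.log n - 3 * Real.log β)/2) = β^((3:ℝ)/2) / n := by
        rw [show -(2 * Real.log n - 3 * Real.log β)/2
            = Real.log β * ((3:ℝ)/2) - Real.log n by ring]
        rw [Real.exp_sub, Real.exp_log hn0, ← Real.rpow_def_of_pos hβ0]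
      have h3 : β^((3:ℝ)/2) / n ≤ E := h2 ▸ h1
      calc (1:ℝ) = u * β^((3:ℝ)/2) := huβ.symm
        _ = (n:ℝ) * u * (β^((3:ℝ)/2)/n) := by field_simp
        _ ≤ (n:ℝ) * u * E := by
            apply mul_le_mul_of_nonneg_left h3 (by positivity)
        _ = L := by rw [hLdef]
    have hLL₀ : L ≤ L₀ := by
      rw [hLdef, hL₀def]
      calc (n:ℝ) * u * E ≤ (n:ℝ) * u * 1 :=
          mul_le_mul_of_nonneg_left hE1 (by positivity)
        _ = (n:ℝ) * u := by ring
    have hIB := inner_bound n β t u E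
      ((2 : ℝ) ^ (-(5 : ℝ) / 2) * u * E) L hβ1 (ht3β t ht) hudef hEdef rfl hLdef hL1
      (S t) hSpd.1 hSeq
    have hBP := Bpart L L₀ t δ hL1 hLL₀ hδdef
    simp only [hGdef]
    calc (∫ y in Set.Ioi (0:ℝ),
          y * (sigmaTilde β t).det ^ (-(1:ℝ)/2) * phi2 ((S t).mulVec (![0,y] - muTilde n β t)))
        ≤ 6*Real.sqrt β * Real.exp (-(8:ℝ)⁻¹*t^2)
          + 3*Real.sqrt L*(1+t^2)*Real.exp (-(L*t^2)/8) := hIB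
      _ ≤ 6*Real.sqrt β * Real.exp (-(8:ℝ)⁻¹*t^2) + 432*(|t|+δ)⁻¹ := by linarith
  -- nonnegativity of the inner integral
  have hnn : ∀ t ∈ Set.Icc (-R) R,
      0 ≤ (∫ y in Set.Ioi (0:ℝ),
        y * (sigmaTilde β t).det ^ (-(1:ℝ)/2) * phi2 ((S t).mulVec (![0,y] - muTilde n β t))) := by
    intro t ht
    apply setIntegral_nonneg measurableSet_Ioi
    intro y hy
    have hypos : (0:ℝ) < y := hy
    have hdet0 : 0 ≤ (sigmaTilde β t).det := ((sigmaTilde_posdef β t hβ0 (ht3β t ht)).det_pos).le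
    exact mul_nonneg (mul_nonneg hypos.le (Real.rpow_nonneg hdet0 _)) (phi2_nonneg _)
  -- main comparison
  have hmono : (∫ t in Set.Icc (-R) R,
      ∫ y in Set.Ioi (0:ℝ),
        y * (sigmaTilde β t).det ^ (-(1:ℝ)/2) * phi2 ((S t).mulVec (![0,y] - muTilde n β t)))
      ≤ ∫ t in Set.Icc (-R) R, G t := by
    apply integral_mono_of_nonneg ?_ hGint ?_
    · rw [EventuallyLE, ae_restrict_iff' measurableSet_Icc]
      exact ae_of_all _ hnn
    · rw [EventuallyLE, ae_restrict_iff' measurableSet_Icc]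
      exact ae_of_all _ hkey
  -- evaluate/bound ∫ G
  have hf1int : Integrable (fun t:ℝ => 6 * Real.sqrt β * Real.exp (-(8:ℝ)⁻¹ * t^2)) := by
    have h := integrable_exp_neg_mul_sq (by norm_num : (0:ℝ) < 8⁻¹)
    exact h.const_mul _
  have hf2cont : Continuous (fun t:ℝ => 432 * (|t|+δ)⁻¹) := by
    apply Continuous.mul continuous_const
    apply Continuous.inv₀ (by continuity)
    intro t
    have := abs_nonneg t
    positivity
  have hGsplit : ∫ t in Set.Icc (-R) R, G t
      = (∫ t in Set.Icc (-R) R, 6 * Real.sqrt β * Real.exp (-(8:ℝ)⁻¹ * t^2))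
        + ∫ t in Set.Icc (-R) R, 432 * (|t|+δ)⁻¹ := by
    rw [hGdef, ← integral_add (hf1int.integrableOn) (hf2cont.integrableOn_Icc)]
  have hpart1 : (∫ t in Set.Icc (-R) R, 6 * Real.sqrt β * Real.exp (-(8:ℝ)⁻¹ * t^2))
      ≤ 36 * Real.sqrt β := by
    have h1 : (∫ t in Set.Icc (-R) R, 6 * Real.sqrt β * Real.exp (-(8:ℝ)⁻¹ * t^2))
        ≤ ∫ t:ℝ, 6 * Real.sqrt β * Real.exp (-(8:ℝ)⁻¹ * t^2) :=
      setIntegral_le_integral hf1int (ae_of_all _ fun t => by positivity)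
    have h2 : (∫ t:ℝ, 6 * Real.sqrt β * Real.exp (-(8:ℝ)⁻¹ * t^2))
        = 6 * Real.sqrt β * Real.sqrt (π * 8) := by
      rw [MeasureTheory.integral_const_mul, integral_gaussian]
      congr 1
      rw [div_inv_eq_mul]
    have h3 : Real.sqrt (π * 8) ≤ 6 := by
      calc Real.sqrt (π * 8) ≤ Real.sqrt 36 := Real.sqrt_le_sqrt (by linarith [Real.pi_le_four])
        _ = 6 := by rw [show (36:ℝ) = 6^2 by norm_num, Real.sqrt_sq (by norm_num)]
    calc (∫ t in Set.Icc (-R) R, 6 * Real.sqrt β * Real.exp (-(8:ℝ)⁻¹ * t^2))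
        ≤ 6 * Real.sqrt β * Real.sqrt (π * 8) := by rw [← h2]; exact h1
      _ ≤ 6 * Real.sqrt β * 6 := by
          apply mul_le_mul_of_nonneg_left h3 (by positivity)
      _ = 36 * Real.sqrt β := by ring
  have hpart2 : (∫ t in Set.Icc (-R) R, 432 * (|t|+δ)⁻¹) ≤ Real.sqrt β := by
    have h1 : (∫ t in Set.Icc (-R) R, 432 * (|t|+δ)⁻¹)
        = 432 * (2 * Real.log ((R+δ)/δ)) := by
      rw [MeasureTheory.integral_const_mul, integral_inv_abs_add R δ hR0 hδ0]
    have hRn : R ≤ (n:ℝ) := by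
      have h2 : 2 * Real.log n - 3 * Real.log β ≤ (n:ℝ)^2 := by
        have h3 : Real.log n ≤ (n:ℝ) - 1 := Real.log_le_sub_one_of_pos hn0
        nlinarith
      calc R ≤ Real.sqrt ((n:ℝ)^2) := Real.sqrt_le_sqrt h2
        _ = (n:ℝ) := Real.sqrt_sq hn0.le
    have hsL₀n : Real.sqrt L₀ ≤ (n:ℝ) := by
      have h2 : L₀ ≤ (n:ℝ)^2 := by
        rw [hL₀def]
        nlinarith
      calc Real.sqrt L₀ ≤ Real.sqrt ((n:ℝ)^2) := Real.sqrt_le_sqrt h2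
        _ = (n:ℝ) := Real.sqrt_sq hn0.le
    have harg : (R+δ)/δ ≤ (n:ℝ)^3 := by
      have he : (R+δ)/δ = R * Real.sqrt L₀ + 1 := by
        rw [hδdef]
        field_simp
      rw [he]
      have h4 : R * Real.sqrt L₀ ≤ (n:ℝ) * (n:ℝ) :=
        mul_le_mul hRn hsL₀n (Real.sqrt_nonneg _) hn0.le
      nlinarith
    have hargpos : 0 < (R+δ)/δ := by positivity
    have h5 : Real.log ((R+δ)/δ) ≤ 3 * Real.log n := by
      calc Real.log ((R+δ)/δ) ≤ Real.log ((n:ℝ)^3) := Real.log_le_log hargpos harg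
        _ = 3 * Real.log n := by rw [Real.log_pow]; norm_num
    have h6 : (n:ℝ)^(c/2) ≤ Real.sqrt β := by
      have h7 : (n:ℝ)^(c/2) = ((n:ℝ)^c)^((1:ℝ)/2) := by
        rw [← Real.rpow_mul hn0.le]
        ring_nf
      rw [h7, Real.sqrt_eq_rpow]
      exact Real.rpow_le_rpow (Real.rpow_nonneg hn0.le _) hβl (by norm_num)
    calc (∫ t in Set.Icc (-R) R, 432 * (|t|+δ)⁻¹)
        = 432 * (2 * Real.log ((R+δ)/δ)) := h1
      _ ≤ 432 * (2 * (3 * Real.log n)) := by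
          apply mul_le_mul_of_nonneg_left _ (by norm_num)
          apply mul_le_mul_of_nonneg_left h5 (by norm_num)
      _ = 2592 * Real.log n := by ring
      _ ≤ (n:ℝ)^(c/2) := hlogn
      _ ≤ Real.sqrt β := h6
  calc (∫ t in Set.Icc (-R) R,
      ∫ y in Set.Ioi (0:ℝ),
        y * (sigmaTilde β t).det ^ (-(1:ℝ)/2) * phi2 ((S t).mulVec (![0,y] - muTilde n β t)))
      ≤ ∫ t in Set.Icc (-R) R, G t := hmono
    _ = (∫ t in Set.Icc (-R) R, 6 * Real.sqrt β * Real.exp (-(8:ℝ)⁻¹ * t^2))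
        + ∫ t in Set.Icc (-R) R, 432 * (|t|+δ)⁻¹ := hGsplit
    _ ≤ 36 * Real.sqrt β + Real.sqrt β := add_le_add hpart1 hpart2
    _ = 37 * Real.sqrt β := by ring
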